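/- If F = {f_x}_{x in G} is the G-harmonic frame for C^m generated by an (n, m, l, lambda, mu)-bidifference set S = {g_1, ..., g_m} for G relative to A, then for every x, y in G with x not equal to y one has m^2 * |<f_x, f_y>|^2 = (m - lambda) + (lambda - mu) * sum_{xi in A} rho_{y-x}(xi). -/

import Mathlib

open Finset

/-- The underlying finite abelian group `G = ZMod n₁ ⊕ ... ⊕ ZMod n_k`
(a fixed cyclic decomposition). -/
abbrev PiG {k : ℕ} (nn : Fin k → ℕ) : Type := ∀ i, ZMod (nn i)

/-- The character `ρ_x(y) = exp(2πi (x(1)y(1)/n₁ + ... + x(k)y(k)/n_k))`. -/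
noncomputable def rho {k : ℕ} (nn : Fin k → ℕ) (x y : PiG nn) : ℂ :=
  Complex.exp (2 * (Real.pi : ℂ) * Complex.I *
    ∑ i, ((x i).val : ℂ) * ((y i).val : ℂ) / ((nn i : ℕ) : ℂ))

open Complex in
noncomputable abbrev tpi : ℂ := 2 * Real.pi * Complex.I

lemma exp_nat_mod (n : ℕ) [NeZero n] (a : ℕ) :
    Complex.exp (tpi * a / n) = Complex.exp (tpi * ((a % n : ℕ) : ℂ) / n) := by
  conv_lhs => rw [← Nat.div_add_mod a n]
  have hn : (n : ℂ) ≠ 0 := Nat.cast_ne_zero.2 (NeZero.ne n)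
  have key : ((n * (a / n) + a % n : ℕ) : ℂ) = n * ((a / n : ℕ) : ℂ) + ((a % n : ℕ) : ℂ) := by
    push_cast; ring
  have : (tpi * (↑(n * (a / n) + a % n)) / n) =
      ((a / n : ℕ) : ℂ) * (2 * Real.pi * Complex.I) + tpi * ((a % n : ℕ) : ℂ) / n := by
    rw [key, mul_add, add_div, mul_comm ((n:ℂ)) _, mul_div_assoc tpi,
      mul_div_assoc _ (n:ℂ), div_self hn, mul_one]
    ring
  rw [this, Complex.exp_add]
  have h1 : Complex.exp (((a / n : ℕ) : ℂ) * (2 * Real.pi * Complex.I)) = 1 := by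
    have := Complex.exp_int_mul_two_pi_mul_I (a / n : ℕ)
    simpa using this
  rw [h1, one_mul]

lemma exp_nat_congr (n : ℕ) [NeZero n] {a b : ℕ} (h : a % n = b % n) :
    Complex.exp (tpi * a / n) = Complex.exp (tpi * b / n) := by
  rw [exp_nat_mod n a, h, ← exp_nat_mod n b]


lemma rho_prod {k : ℕ} (nn : Fin k → ℕ) (x y : PiG nn) :
    rho nn x y = ∏ i, Complex.exp (tpi * (((x i).val * (y i).val : ℕ) : ℂ) / (nn i)) := by
  rw [rho, Finset.mul_sum, Complex.exp_sum]
  refine Finset.prod_congr rfl fun i _ => ?_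
  push_cast
  ring_nf

lemma rho_comm {k : ℕ} (nn : Fin k → ℕ) (x y : PiG nn) : rho nn x y = rho nn y x := by
  unfold rho
  congr 1
  refine congrArg _ (Finset.sum_congr rfl fun i _ => ?_)
  ring

lemma rho_add_right {k : ℕ} (nn : Fin k → ℕ) [∀ i, NeZero (nn i)] (a b c : PiG nn) :
    rho nn a (b + c) = rho nn a b * rho nn a c := by
  rw [rho_prod, rho_prod, rho_prod, ← Finset.prod_mul_distrib]
  refine Finset.prod_congr rfl fun i _ => ?_
  rw [← Complex.exp_add]
  have hn : ((nn i : ℕ) : ℂ) ≠ 0 := Nat.cast_ne_zero.2 (NeZero.ne _)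
  have comb : tpi * (((a i).val * (b i).val : ℕ) : ℂ) / (nn i) +
      tpi * (((a i).val * (c i).val : ℕ) : ℂ) / (nn i) =
      tpi * (((a i).val * (b i).val + (a i).val * (c i).val : ℕ) : ℂ) / (nn i) := by
    push_cast; ring
  rw [comb]
  refine exp_nat_congr (nn i) ?_
  calc (a i).val * ((b + c) i).val % nn i
      = (a i).val * (((b i).val + (c i).val) % nn i) % nn i := by
        rw [show ((b+c) i).val = ((b i).val + (c i).val) % nn i from by
          show (b i + c i).val = _; rw [ZMod.val_add]]
    _ = (a i).val * ((b i).val + (c i).val) % nn i :=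
        Nat.ModEq.mul_left _ (Nat.mod_modEq _ _)
    _ = ((a i).val * (b i).val + (a i).val * (c i).val) % nn i := by rw [Nat.mul_add]

lemma rho_zero_right {k : ℕ} (nn : Fin k → ℕ) (a : PiG nn) : rho nn a 0 = 1 := by
  unfold rho
  have : ∀ i : Fin k, ((a i).val : ℂ) * (((0 : PiG nn) i).val : ℂ) / (nn i) = 0 := by
    intro i
    have : ((0 : PiG nn) i) = 0 := rfl
    rw [this, ZMod.val_zero]
    simp
  rw [Finset.sum_congr rfl fun i _ => this i]
  simp

lemma rho_ne_zero {k : ℕ} (nn : Fin k → ℕ) (a b : PiG nn) : rho nn a b ≠ 0 :=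
  Complex.exp_ne_zero _

lemma conj_rho {k : ℕ} (nn : Fin k → ℕ) [∀ i, NeZero (nn i)] (a b : PiG nn) :
    (starRingEnd ℂ) (rho nn a b) = rho nn a (-b) := by
  have h1 : rho nn a b * rho nn a (-b) = 1 := by
    rw [← rho_add_right, add_neg_cancel, rho_zero_right]
  have h2 : (starRingEnd ℂ) (rho nn a b) = (rho nn a b)⁻¹ := by
    rw [rho, ← Complex.exp_conj, ← Complex.exp_neg]
    congr 1
    have hpi : (starRingEnd ℂ) (2 * (Real.pi : ℂ) * Complex.I) =
        -(2 * (Real.pi : ℂ) * Complex.I) := by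
      rw [map_mul, map_mul, Complex.conj_I, map_ofNat, Complex.conj_ofReal]; ring
    have hS : (starRingEnd ℂ) (∑ i, ((a i).val : ℂ) * ((b i).val : ℂ) / (nn i)) =
        ∑ i, ((a i).val : ℂ) * ((b i).val : ℂ) / (nn i) := by
      rw [map_sum]
      refine Finset.sum_congr rfl fun i _ => ?_
      rw [map_div₀, map_mul, Complex.conj_natCast, Complex.conj_natCast, Complex.conj_natCast]
    rw [map_mul, hpi, hS]; ring
  rw [h2, inv_eq_of_mul_eq_one_right h1]

lemma zmod_sum_zero (n : ℕ) [NeZero n] (v : ℕ) (hv0 : 0 < v) (hvn : v < n) :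
    ∑ t : ZMod n, Complex.exp (tpi * ((v * t.val : ℕ) : ℂ) / n) = 0 := by
  have hn : (n : ℂ) ≠ 0 := Nat.cast_ne_zero.2 (NeZero.ne n)
  set ζ : ℂ := Complex.exp (tpi * v / n) with hζ
  have hterm : ∀ t : ZMod n,
      Complex.exp (tpi * ((v * t.val : ℕ) : ℂ) / n) = ζ ^ t.val := by
    intro t
    rw [hζ, ← Complex.exp_nat_mul]
    congr 1
    push_cast
    field_simp
  rw [Finset.sum_congr rfl fun t _ => hterm t]
  have hbij : ∑ t : ZMod n, ζ ^ t.val = ∑ j ∈ Finset.range n, ζ ^ j := by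
    refine Finset.sum_nbij' (fun t => t.val) (fun j => (j : ZMod n)) ?_ ?_ ?_ ?_ ?_
    · intro t _; exact Finset.mem_range.2 (ZMod.val_lt t)
    · intro j _; exact Finset.mem_univ _
    · intro t _; simp [ZMod.natCast_val, ZMod.cast_id]
    · intro j hj; exact ZMod.val_cast_of_lt (Finset.mem_range.1 hj)
    · intro t _; rfl
  rw [hbij]
  have hζn : ζ ^ n = 1 := by
    rw [hζ, ← Complex.exp_nat_mul]
    have : (n : ℂ) * (tpi * v / n) = (v : ℂ) * (2 * Real.pi * Complex.I) := by
      field_simp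
    rw [this]
    exact_mod_cast Complex.exp_int_mul_two_pi_mul_I v
  have hζ1 : ζ ≠ 1 := by
    intro h
    rw [hζ, Complex.exp_eq_one_iff] at h
    obtain ⟨j, hj⟩ := h
    have h2 : (v : ℂ) = j * n := by
      have hI : (2 * (Real.pi : ℂ) * Complex.I) ≠ 0 := by
        simp [Real.pi_ne_zero, Complex.I_ne_zero]
      field_simp at hj
      have : (2 * (Real.pi : ℂ) * Complex.I) * (v : ℂ) =
          (2 * (Real.pi : ℂ) * Complex.I) * ((j : ℂ) * n) := by
        linear_combination (2 * (Real.pi : ℂ) * Complex.I) * hj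
      exact mul_left_cancel₀ hI this
    have h3 : (v : ℤ) = j * n := by exact_mod_cast h2
    have h4 : (n : ℤ) ∣ (v : ℤ) := ⟨j, by rw [h3]; ring⟩
    have h5 : n ∣ v := Int.natCast_dvd_natCast.1 h4
    have := Nat.le_of_dvd hv0 h5
    omega
  rw [geom_sum_eq hζ1, hζn]
  simp

lemma sum_rho_zero {k : ℕ} (nn : Fin k → ℕ) [∀ i, NeZero (nn i)] (z : PiG nn) (hz : z ≠ 0) :
    ∑ ξ : PiG nn, rho nn z ξ = 0 := by
  have hfac : ∑ ξ : PiG nn, rho nn z ξ =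
      ∏ i, ∑ t : ZMod (nn i), Complex.exp (tpi * (((z i).val * t.val : ℕ) : ℂ) / (nn i)) := by
    rw [Finset.prod_univ_sum, ← Fintype.piFinset_univ]
    exact Finset.sum_congr rfl fun ξ _ => rho_prod nn z ξ
  obtain ⟨i0, hi0⟩ : ∃ i, z i ≠ 0 := by
    by_contra h
    push_neg at h
    exact hz (funext h)
  rw [hfac]
  refine Finset.prod_eq_zero (Finset.mem_univ i0) ?_
  exact zmod_sum_zero (nn i0) (z i0).val (ZMod.val_pos.2 hi0) (ZMod.val_lt _)


/-- The vector `f_x = (1/√m) (ρ_{g_j}(x))_{j=1}^m` of the `G`-harmonic frame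
generated by `S = {g_1, ..., g_m}`. -/
noncomputable def harm {k m : ℕ} (nn : Fin k → ℕ) (g : Fin m → PiG nn) (x : PiG nn) :
    EuclideanSpace ℂ (Fin m) :=
  (WithLp.equiv 2 (Fin m → ℂ)).symm fun j => ((Real.sqrt m : ℝ) : ℂ)⁻¹ * rho nn (g j) x

/-- The frame angle `|⟨f_x, f_y⟩|`. -/
noncomputable def ang {k m : ℕ} (nn : Fin k → ℕ) (g : Fin m → PiG nn) (x y : PiG nn) : ℝ :=
  ‖(inner ℂ (harm nn g x) (harm nn g y) : ℂ)‖

lemma inner_harm {k m : ℕ} (nn : Fin k → ℕ) [∀ i, NeZero (nn i)] (hm : 0 < m)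
    (g : Fin m → PiG nn) (x y : PiG nn) :
    (inner ℂ (harm nn g x) (harm nn g y) : ℂ) =
      ((m : ℂ))⁻¹ * ∑ j, rho nn (g j) (y - x) := by
  have happ : ∀ (w : PiG nn) (j : Fin m),
      harm nn g w j = ((Real.sqrt m : ℝ) : ℂ)⁻¹ * rho nn (g j) w := fun w j => rfl
  rw [PiLp.inner_apply]
  have : ∀ j : Fin m, (inner ℂ (harm nn g x j) (harm nn g y j) : ℂ) =
      ((m : ℂ))⁻¹ * rho nn (g j) (y - x) := by
    intro j
    rw [RCLike.inner_apply, happ, happ, map_mul, conj_rho]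
    have hc : (starRingEnd ℂ) (((Real.sqrt m : ℝ) : ℂ)⁻¹) = ((Real.sqrt m : ℝ) : ℂ)⁻¹ := by
      rw [map_inv₀, Complex.conj_ofReal]
    have hsq : ((Real.sqrt m : ℝ) : ℂ)⁻¹ * ((Real.sqrt m : ℝ) : ℂ)⁻¹ = ((m : ℂ))⁻¹ := by
      rw [← mul_inv]
      norm_cast
      rw [Real.mul_self_sqrt (Nat.cast_nonneg m)]
      norm_num
    have hrr : rho nn (g j) (-x) * rho nn (g j) y = rho nn (g j) (y - x) := by
      rw [← rho_add_right, neg_add_eq_sub]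
    rw [hc, mul_comm]
    calc ((Real.sqrt m : ℝ) : ℂ)⁻¹ * rho nn (g j) (-x) *
          (((Real.sqrt m : ℝ) : ℂ)⁻¹ * rho nn (g j) y)
        = (((Real.sqrt m : ℝ) : ℂ)⁻¹ * ((Real.sqrt m : ℝ) : ℂ)⁻¹) *
          (rho nn (g j) (-x) * rho nn (g j) y) := by ring
      _ = ((m : ℂ))⁻¹ * rho nn (g j) (y - x) := by rw [hsq, hrr]
  rw [Finset.sum_congr rfl fun j _ => this j, ← Finset.mul_sum]


/-- The set of frame angles `Θ = { |⟨f_x, f_y⟩| : x ≠ y }` of the harmonic frame. -/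
noncomputable def anglesSet {k m : ℕ} (nn : Fin k → ℕ) (g : Fin m → PiG nn) : Set ℝ :=
  {r : ℝ | ∃ x y : PiG nn, x ≠ y ∧ ang nn g x y = r}

/-- The harmonic frame is a tight frame (with the forced constant `n/m`):
`∑_x f_x ⊗ f_x^* = (n/m) I_m` as operators. -/
noncomputable def IsTightHarm {k m : ℕ} (nn : Fin k → ℕ) [∀ i, NeZero (nn i)]
    (g : Fin m → PiG nn) : Prop :=
  ∀ v : EuclideanSpace ℂ (Fin m),
    ∑ x : PiG nn, (inner ℂ (harm nn g x) v : ℂ) • harm nn g x =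
      ((Fintype.card (PiG nn) : ℂ) / (m : ℂ)) • v

/-- `diffCount g x` is the number of ways to write `x = g_a - g_b` with `g_a ≠ g_b`
distinct elements of `S = {g_1, ..., g_m}`. -/
noncomputable def diffCount {G : Type*} [AddCommGroup G] {m : ℕ} (g : Fin m → G) (x : G) : ℕ :=
  Nat.card {p : Fin m × Fin m // p.1 ≠ p.2 ∧ g p.1 - g p.2 = x}

lemma diffCount_eq_card {G : Type*} [AddCommGroup G] [DecidableEq G] {m : ℕ} (g : Fin m → G)
    (x : G) : diffCount g x =
      ((Finset.univ : Finset (Fin m)).offDiag.filter (fun p => g p.1 - g p.2 = x)).card := by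
  rw [diffCount, Nat.card_eq_fintype_card, Fintype.card_subtype]
  congr 1
  ext p
  simp [Finset.mem_offDiag, and_comm]

lemma diffCount_zero {G : Type*} [AddCommGroup G] {m : ℕ} (g : Fin m → G)
    (hg : Function.Injective g) : diffCount g 0 = 0 := by
  rw [diffCount]
  have : IsEmpty {p : Fin m × Fin m // p.1 ≠ p.2 ∧ g p.1 - g p.2 = 0} := by
    refine ⟨fun ⟨p, hne, hsub⟩ => hne (hg ?_)⟩
    rwa [sub_eq_zero] at hsub
  exact Nat.card_of_isEmpty

lemma T_mul_conj {k m : ℕ} (nn : Fin k → ℕ) [∀ i, NeZero (nn i)]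
    (g : Fin m → PiG nn) (z : PiG nn) :
    (∑ a, rho nn (g a) z) * (starRingEnd ℂ) (∑ b, rho nn (g b) z) =
      (m : ℂ) + ∑ ξ : PiG nn, (diffCount g ξ : ℂ) * rho nn z ξ := by
  classical
  rw [map_sum, Finset.sum_mul_sum]
  have hterm : ∀ a b : Fin m, rho nn (g a) z * (starRingEnd ℂ) (rho nn (g b) z) =
      rho nn z (g a - g b) := by
    intro a b
    rw [rho_comm nn (g b) z, conj_rho, rho_comm nn (g a) z, ← rho_add_right, sub_eq_add_neg]
  simp_rw [hterm]
  rw [← Finset.sum_product']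
  rw [← Finset.diag_union_offDiag (Finset.univ : Finset (Fin m)),
    Finset.sum_union (Finset.disjoint_diag_offDiag _)]
  congr 1
  · rw [Finset.sum_diag]
    have : ∀ a : Fin m, rho nn z (g a - g a) = 1 := by
      intro a; rw [sub_self, rho_zero_right]
    rw [Finset.sum_congr rfl fun a _ => this a]
    simp
  · rw [← Finset.sum_fiberwise_of_maps_to
      (fun (p : Fin m × Fin m) (_ : p ∈ (Finset.univ : Finset (Fin m)).offDiag) =>
        Finset.mem_univ (g p.1 - g p.2)) (fun p => rho nn z (g p.1 - g p.2))]
    refine Finset.sum_congr rfl fun ξ _ => ?_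
    have : ∀ p ∈ (Finset.univ : Finset (Fin m)).offDiag.filter
        (fun p => g p.1 - g p.2 = ξ), rho nn z (g p.1 - g p.2) = rho nn z ξ := by
      intro p hp
      rw [(Finset.mem_filter.1 hp).2]
    rw [Finset.sum_congr rfl this, Finset.sum_const, diffCount_eq_card, nsmul_eq_mul]


/-- If `F = {f_x}` is the `G`-harmonic frame for `ℂ^m` generated by an
`(n, m, l, λ, μ)`-bidifference set `S = {g_1, ..., g_m}` for `G` relative to `A`, then for
all `x ≠ y` one has `m² |⟨f_x, f_y⟩|² = (m - λ) + (λ - μ) ∑_{ξ ∈ A} ρ_{y-x}(ξ)`. -/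
theorem statement9 {k m : ℕ} (nn : Fin k → ℕ) [∀ i, NeZero (nn i)] (hm : 0 < m)
    (g : Fin m → PiG nn) (hg : Function.Injective g)
    (A : Finset (PiG nn)) (l lam mu : ℕ)
    (h0A : (0 : PiG nn) ∈ A) (hl : A.card = l)
    (hlam : ∀ x ∈ A, x ≠ 0 → diffCount g x = lam)
    (hmu : ∀ x : PiG nn, x ∉ A → diffCount g x = mu)
    (x y : PiG nn) (hxy : x ≠ y) :
    ((m : ℂ)) ^ 2 * ((ang nn g x y : ℝ) : ℂ) ^ 2 =
      ((m : ℂ) - (lam : ℂ)) + ((lam : ℂ) - (mu : ℂ)) * ∑ ξ ∈ A, rho nn (y - x) ξ := by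
  classical
  set z := y - x with hzdef
  have hz : z ≠ 0 := sub_ne_zero.2 (Ne.symm hxy)
  set T : ℂ := ∑ j, rho nn (g j) z with hT
  have hang : ang nn g x y = (m : ℝ)⁻¹ * ‖T‖ := by
    rw [ang, inner_harm nn hm g x y, norm_mul, norm_inv]
    congr 2
    simp
  have hma : ((m : ℝ)) * ang nn g x y = ‖T‖ := by
    rw [hang, ← mul_assoc, mul_inv_cancel₀ (by positivity : (m:ℝ) ≠ 0), one_mul]
  have hL : ((m : ℂ)) ^ 2 * ((ang nn g x y : ℝ) : ℂ) ^ 2 = ((‖T‖ : ℝ) : ℂ) ^ 2 := by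
    rw [← hma]; push_cast; ring
  have hnorm : ((‖T‖ : ℝ) : ℂ) ^ 2 = T * (starRingEnd ℂ) T := by
    rw [Complex.mul_conj]
    norm_cast
    rw [Complex.normSq_eq_norm_sq]
  set SA := ∑ ξ ∈ A, rho nn z ξ with hSA
  have htot : ∑ ξ : PiG nn, rho nn z ξ = 0 := sum_rho_zero nn z hz
  have hcompl : ∑ ξ ∈ Aᶜ, rho nn z ξ = -SA := by
    have h := Finset.sum_add_sum_compl A (fun ξ => rho nn z ξ)
    rw [htot] at h
    linear_combination h
  have h1 : ∑ ξ ∈ A, (diffCount g ξ : ℂ) * rho nn z ξ = lam * SA - lam := by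
    rw [← Finset.add_sum_erase A _ h0A, diffCount_zero g hg]
    simp only [Nat.cast_zero, zero_mul, zero_add]
    have hcongr : ∀ ξ ∈ A.erase 0, (diffCount g ξ : ℂ) * rho nn z ξ = (lam : ℂ) * rho nn z ξ := by
      intro ξ hξ
      rw [hlam ξ (Finset.mem_of_mem_erase hξ) (Finset.ne_of_mem_erase hξ)]
    rw [Finset.sum_congr rfl hcongr, ← Finset.mul_sum]
    have herase : ∑ ξ ∈ A.erase 0, rho nn z ξ = SA - 1 := by
      have h := Finset.add_sum_erase A (fun ξ => rho nn z ξ) h0A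
      rw [rho_zero_right nn z, ← hSA] at h
      linear_combination h
    rw [herase]; ring
  have h2 : ∑ ξ ∈ Aᶜ, (diffCount g ξ : ℂ) * rho nn z ξ = (mu : ℂ) * (-SA) := by
    have hcongr : ∀ ξ ∈ Aᶜ, (diffCount g ξ : ℂ) * rho nn z ξ = (mu : ℂ) * rho nn z ξ := by
      intro ξ hξ; rw [hmu ξ (Finset.mem_compl.1 hξ)]
    rw [Finset.sum_congr rfl hcongr, ← Finset.mul_sum, hcompl]
  have hsplit : ∑ ξ : PiG nn, (diffCount g ξ : ℂ) * rho nn z ξ =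
      (lam : ℂ) * SA - lam - mu * SA := by
    rw [← Finset.sum_add_sum_compl A, h1, h2]; ring
  rw [hL, hnorm, hT, T_mul_conj nn g z, hsplit]
  ring
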